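/- Let f : [a,b] → ℝ be a strictly positive, differentiable function such that f' is increasing and f'(a) > 0, and let g : [a,b] → ℝ be increasing and nonnegative. Then ∫_a^b g/f ≤ (g(b)/f'(a))·log(f(b)/f(a)) ≤ f(b)·g(b)/(e·f(a)·f'(a)). -/

import Mathlib

theorem stmt9 (a b : ℝ) (hab : a < b)
    (f : ℝ → ℝ) (hf_pos : ∀ x ∈ Set.Icc a b, 0 < f x)
    (hf_diff : DifferentiableOn ℝ f (Set.Icc a b))
    (hf'_mono : MonotoneOn (derivWithin f (Set.Icc a b)) (Set.Icc a b))
    (hf'a : 0 < derivWithin f (Set.Icc a b) a)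
    (g : ℝ → ℝ) (hg_mono : MonotoneOn g (Set.Icc a b))
    (hg_nonneg : ∀ x ∈ Set.Icc a b, 0 ≤ g x) :
    (∫ x in a..b, g x / f x) ≤
        (g b / derivWithin f (Set.Icc a b) a) * Real.log (f b / f a) ∧
      (g b / derivWithin f (Set.Icc a b) a) * Real.log (f b / f a) ≤
        f b * g b / (Real.exp 1 * f a * derivWithin f (Set.Icc a b) a) := by
  have hab' : a ≤ b := hab.le
  set f' := derivWithin f (Set.Icc a b) with hf'def
  have huIcc : Set.uIcc a b = Set.Icc a b := Set.uIcc_of_le hab'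
  have ha : a ∈ Set.Icc a b := Set.left_mem_Icc.2 hab'
  have hb : b ∈ Set.Icc a b := Set.right_mem_Icc.2 hab'
  have hfc : ContinuousOn f (Set.Icc a b) := hf_diff.continuousOn
  have hfinv : ContinuousOn (fun x => (f x)⁻¹) (Set.Icc a b) :=
    ContinuousOn.inv₀ hfc (fun x hx => (hf_pos x hx).ne')
  have hint1 : IntervalIntegrable (fun x => g x / f x) MeasureTheory.volume a b := by
    have := (MonotoneOn.intervalIntegrable (μ := MeasureTheory.volume) (by rw [huIcc]; exact hg_mono)).mul_continuousOn
      (g := fun x => (f x)⁻¹) (by rw [huIcc]; exact hfinv)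
    simpa [div_eq_mul_inv] using this
  have hint2 : IntervalIntegrable (fun x => f' x / f x) MeasureTheory.volume a b := by
    have := (MonotoneOn.intervalIntegrable (μ := MeasureTheory.volume) (by rw [huIcc]; exact hf'_mono)).mul_continuousOn
      (g := fun x => (f x)⁻¹) (by rw [huIcc]; exact hfinv)
    simpa [div_eq_mul_inv] using this
  have hlog : (∫ x in a..b, f' x / f x) = Real.log (f b) - Real.log (f a) := by
    apply intervalIntegral.integral_eq_sub_of_hasDeriv_right_of_le hab'
      (hfc.log fun x hx => (hf_pos x hx).ne') ?_ hint2
    intro x hx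
    have hx' : x ∈ Set.Icc a b := Set.mem_Icc_of_Ioo hx
    have hd := ((hf_diff x hx').hasDerivWithinAt).log (hf_pos x hx').ne'
    exact HasDerivWithinAt.mono_of_mem_nhdsWithin hd (Icc_mem_nhdsGT_of_mem ⟨hx.1.le, hx.2⟩)
  have hlogdiv : Real.log (f b / f a) = Real.log (f b) - Real.log (f a) :=
    Real.log_div (hf_pos b hb).ne' (hf_pos a ha).ne'
  have hcoef : 0 ≤ g b / f' a := div_nonneg (hg_nonneg b hb) hf'a.le
  constructor
  · have hptwise : ∀ x ∈ Set.Icc a b, g x / f x ≤ (g b / f' a) * (f' x / f x) := by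
      intro x hx
      have hfx : 0 < f x := hf_pos x hx
      have hgx : g x ≤ g b := hg_mono hx hb hx.2
      have hfx' : f' a ≤ f' x := hf'_mono ha hx hx.1
      have h1 : (1 : ℝ) ≤ f' x / f' a := (one_le_div hf'a).2 hfx'
      have h2 : g x ≤ g b * (f' x / f' a) := by
        calc g x ≤ g b := hgx
        _ = g b * 1 := by ring
        _ ≤ g b * (f' x / f' a) := by
            exact mul_le_mul_of_nonneg_left h1 (hg_nonneg b hb)
      have := (div_le_div_iff_of_pos_right hfx).2 h2
      calc g x / f x ≤ g b * (f' x / f' a) / f x := this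
        _ = (g b / f' a) * (f' x / f x) := by ring
    have hint3 : IntervalIntegrable (fun x => (g b / f' a) * (f' x / f x))
        MeasureTheory.volume a b := hint2.const_mul _
    calc (∫ x in a..b, g x / f x)
        ≤ ∫ x in a..b, (g b / f' a) * (f' x / f x) :=
          intervalIntegral.integral_mono_on hab' hint1 hint3 hptwise
      _ = (g b / f' a) * ∫ x in a..b, f' x / f x := by
          exact intervalIntegral.integral_const_mul _ _
      _ = (g b / f' a) * Real.log (f b / f a) := by rw [hlog, hlogdiv]
  · have ht : 0 < f b / f a := div_pos (hf_pos b hb) (hf_pos a ha)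
    have hkey : Real.log (f b / f a) ≤ (f b / f a) / Real.exp 1 := by
      have h := Real.log_le_sub_one_of_pos (show 0 < (f b / f a) / Real.exp 1 by positivity)
      rw [Real.log_div ht.ne' (Real.exp_ne_zero 1), Real.log_exp] at h
      linarith
    calc (g b / f' a) * Real.log (f b / f a)
        ≤ (g b / f' a) * ((f b / f a) / Real.exp 1) :=
          mul_le_mul_of_nonneg_left hkey hcoef
      _ = f b * g b / (Real.exp 1 * f a * f' a) := by
          field_simp
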